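/- If the distortion function D is convex, then 𝓛_Q^Pichler ⊆ 𝓛_Q^Acerbi, where 𝓛_Q^Acerbi := {X | ∫_{(0,1)} |F^←_X(u)| dQ(u) < ∞} and 𝓛_Q^Pichler := {X | ∫_{(0,1)} F^←_{|X|}(u) dQ(u) < ∞}. -/

import Mathlib

open MeasureTheory

/-- The distribution function `F_X(x) = P[X ≤ x]` of a random variable `X`. -/
noncomputable def distFun {Ω : Type*} [MeasurableSpace Ω] (P : Measure Ω) (X : Ω → ℝ) (x : ℝ) : ℝ :=
  (P {ω | X ω ≤ x}).toReal

/-- The (lower) quantile function `F^←_X(u) = inf {x | F_X(x) ≥ u}`. -/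
noncomputable def quantile {Ω : Type*} [MeasurableSpace Ω] (P : Measure Ω) (X : Ω → ℝ) (u : ℝ) : ℝ :=
  sInf {x : ℝ | u ≤ distFun P X x}

/-- A distortion function: an increasing, right-continuous `D : [0,1] → [0,1]`
with `D 0 = 0` and `sup_{u ∈ (0,1)} D u = 1`. -/
structure IsDistortion (D : ℝ → ℝ) : Prop where
  mapsTo : ∀ u ∈ Set.Icc (0:ℝ) 1, D u ∈ Set.Icc (0:ℝ) 1
  mono : ∀ ⦃a b : ℝ⦄, 0 ≤ a → a ≤ b → b ≤ 1 → D a ≤ D b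
  rightCont : ∀ u ∈ Set.Ico (0:ℝ) 1, ContinuousWithinAt D (Set.Icc u 1) u
  zero : D 0 = 0
  sup_one : sSup (D '' Set.Ioo 0 1) = 1

/-- `Q` is the probability measure on the Borel sets of `(0,1)` corresponding to
the distortion function `D`, i.e. `Q (a,b] = D b - D a` for `0 < a ≤ b < 1`. -/
def IsCorresponding (D : ℝ → ℝ) (Q : Measure ℝ) : Prop :=
  IsProbabilityMeasure Q ∧ Q (Set.Ioo (0:ℝ) 1) = 1 ∧
    ∀ a b : ℝ, 0 < a → a ≤ b → b < 1 → Q (Set.Ioc a b) = ENNReal.ofReal (D b - D a)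

section Helpers

variable {Ω : Type*} [MeasurableSpace Ω] (P : Measure Ω) [IsProbabilityMeasure P]

lemma distFun_nonneg (X : Ω → ℝ) (x : ℝ) : 0 ≤ distFun P X x :=
  ENNReal.toReal_nonneg

lemma distFun_mono (X : Ω → ℝ) : Monotone (distFun P X) := by
  intro x y hxy
  exact ENNReal.toReal_mono (measure_ne_top P _)
    (measure_mono fun ω (h : X ω ≤ x) => le_trans h hxy)

lemma exists_distFun_ge (X : Ω → ℝ) (hX : Measurable X) {u : ℝ} (hu : u < 1) :
    ∃ x, u ≤ distFun P X x := by
  rcases le_or_gt u 0 with h | h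
  · exact ⟨0, le_trans h (distFun_nonneg P X 0)⟩
  · have hU : (⋃ n : ℕ, {ω | X ω ≤ (n : ℝ)}) = Set.univ := by
      ext ω; simp only [Set.mem_iUnion, Set.mem_univ, iff_true, Set.mem_setOf_eq]
      exact exists_nat_ge (X ω)
    have hmono : Monotone fun n : ℕ => {ω | X ω ≤ (n : ℝ)} := by
      intro m n hmn ω (h : X ω ≤ m)
      exact le_trans h (by exact_mod_cast Nat.cast_le.mpr hmn)
    have htend : Filter.Tendsto (fun n : ℕ => P {ω | X ω ≤ (n : ℝ)}) Filter.atTop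
        (nhds 1) := by
      have := tendsto_measure_iUnion_atTop (μ := P) hmono
      rwa [hU, measure_univ] at this
    have hlt : ENNReal.ofReal u < 1 := ENNReal.ofReal_lt_one.mpr hu
    obtain ⟨n, hn⟩ := (htend.eventually (lt_mem_nhds hlt)).exists
    refine ⟨n, ?_⟩
    have : u ≤ (P {ω | X ω ≤ (n : ℝ)}).toReal := by
      have h1 : ENNReal.ofReal u ≤ P {ω | X ω ≤ (n : ℝ)} := hn.le
      have := ENNReal.toReal_mono (measure_ne_top P _) h1
      rwa [ENNReal.toReal_ofReal h.le] at this
    exact this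

lemma exists_distFun_lt (X : Ω → ℝ) (hX : Measurable X) {u : ℝ} (hu : 0 < u) :
    ∃ x, distFun P X x < u := by
  have hI : (⋂ n : ℕ, {ω | X ω ≤ -(n : ℝ)}) = ∅ := by
    ext ω; simp only [Set.mem_iInter, Set.mem_empty_iff_false, iff_false, not_forall,
      Set.mem_setOf_eq, not_le]
    obtain ⟨n, hn⟩ := exists_nat_gt (-X ω)
    exact ⟨n, by linarith⟩
  have hanti : Antitone fun n : ℕ => {ω | X ω ≤ -(n : ℝ)} := by
    intro m n hmn ω (h : X ω ≤ -(n : ℝ))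
    exact le_trans h (by simp; exact_mod_cast hmn)
  have htend : Filter.Tendsto (fun n : ℕ => P {ω | X ω ≤ -(n : ℝ)}) Filter.atTop
      (nhds 0) := by
    have hms : ∀ n : ℕ, NullMeasurableSet {ω | X ω ≤ -(n : ℝ)} P :=
      fun n => (measurableSet_le hX measurable_const).nullMeasurableSet
    have hfin : ∃ n : ℕ, P {ω | X ω ≤ -(n : ℝ)} ≠ ⊤ := ⟨0, measure_ne_top P _⟩
    have h := tendsto_measure_iInter_atTop (μ := P) hms hanti hfin
    rw [hI, measure_empty] at h
    exact h
  have hlt : (0 : ENNReal) < ENNReal.ofReal u := ENNReal.ofReal_pos.mpr hu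
  obtain ⟨n, hn⟩ := (htend.eventually (gt_mem_nhds hlt)).exists
  refine ⟨-(n : ℝ), ?_⟩
  have := ENNReal.toReal_lt_toReal (measure_ne_top P _) ENNReal.ofReal_ne_top |>.mpr hn
  rwa [ENNReal.toReal_ofReal hu.le] at this

lemma bddBelow_quantileSet (X : Ω → ℝ) (hX : Measurable X) {u : ℝ} (hu : 0 < u) :
    BddBelow {x : ℝ | u ≤ distFun P X x} := by
  obtain ⟨x0, hx0⟩ := exists_distFun_lt P X hX hu
  refine ⟨x0, fun x hx => ?_⟩
  by_contra h
  push_neg at h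
  exact absurd (le_trans hx (distFun_mono P X h.le)) (not_le.mpr hx0)

lemma nonempty_quantileSet (X : Ω → ℝ) (hX : Measurable X) {u : ℝ} (hu : u < 1) :
    {x : ℝ | u ≤ distFun P X x}.Nonempty :=
  exists_distFun_ge P X hX hu

lemma quantile_monotoneOn (X : Ω → ℝ) (hX : Measurable X) :
    MonotoneOn (quantile P X) (Set.Ioo (0:ℝ) 1) := by
  intro u hu v hv huv
  exact csInf_le_csInf (bddBelow_quantileSet P X hX hu.1)
    (nonempty_quantileSet P X hX hv.2)
    (fun x hx => le_trans huv hx)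

lemma quantile_abs_nonneg (X : Ω → ℝ) {u : ℝ} (hu : 0 < u) :
    0 ≤ quantile P (fun ω => |X ω|) u := by
  apply Real.sInf_nonneg
  intro x hx
  by_contra h
  push_neg at h
  have hempty : {ω | |X ω| ≤ x} = ∅ := by
    ext ω; simp only [Set.mem_setOf_eq, Set.mem_empty_iff_false, iff_false, not_le]
    exact lt_of_lt_of_le h (abs_nonneg _)
  have : distFun P (fun ω => |X ω|) x = 0 := by
    simp [distFun, hempty]
  simp only [Set.mem_setOf_eq, this] at hx
  exact absurd hx (not_le.mpr hu)

lemma quantile_le_quantile_abs (X : Ω → ℝ) (hX : Measurable X) {u : ℝ}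
    (hu : u ∈ Set.Ioo (0:ℝ) 1) :
    quantile P X u ≤ quantile P (fun ω => |X ω|) u := by
  refine csInf_le_csInf (bddBelow_quantileSet P X hX hu.1)
    (nonempty_quantileSet P (fun ω => |X ω|) hX.abs hu.2) ?_
  intro x hx
  simp only [Set.mem_setOf_eq] at hx ⊢
  refine le_trans hx ?_
  exact ENNReal.toReal_mono (measure_ne_top P _)
    (measure_mono fun ω (h : |X ω| ≤ x) => le_trans (le_abs_self _) h)

lemma neg_quantile_abs_le (X : Ω → ℝ) (hX : Measurable X) {u v : ℝ}
    (hu : u ∈ Set.Ioo (0:ℝ) 1) (hv : v ∈ Set.Ioo (0:ℝ) 1) (huv : 1 - u < v) :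
    -(quantile P (fun ω => |X ω|) v) ≤ quantile P X u := by
  apply le_csInf (nonempty_quantileSet P X hX hu.2)
  intro x hx
  rw [neg_le]
  apply le_csInf (nonempty_quantileSet P (fun ω => |X ω|) hX.abs hv.2)
  intro y hy
  by_contra h
  push_neg at h
  have hxy : x < -y := by linarith
  have hsub : {ω | X ω ≤ x} ⊆ {ω | |X ω| ≤ y}ᶜ := by
    intro ω (hω : X ω ≤ x)
    simp only [Set.mem_compl_iff, Set.mem_setOf_eq, not_le]
    rcases lt_or_ge y (|X ω|) with h1 | h1
    · exact h1
    · exfalso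
      have : -y ≤ X ω := neg_le_of_abs_le h1
      linarith
  have hcompl : P ({ω | |X ω| ≤ y}ᶜ) = 1 - P {ω | |X ω| ≤ y} :=
    prob_compl_eq_one_sub (hX.abs measurableSet_Iic)
  have h1 : distFun P X x ≤ (1 - P {ω | |X ω| ≤ y}).toReal := by
    rw [← hcompl]
    exact ENNReal.toReal_mono (measure_ne_top P _) (measure_mono hsub)
  have h2 : (1 - P {ω | |X ω| ≤ y}).toReal = 1 - distFun P (fun ω => |X ω|) y := by
    rw [ENNReal.toReal_sub_of_le prob_le_one ENNReal.one_ne_top, ENNReal.toReal_one]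
    rfl
  rw [h2] at h1
  have hFy : v ≤ distFun P (fun ω => |X ω|) y := hy
  have hFx : u ≤ distFun P X x := hx
  linarith

end Helpers

/-- If `D` is convex, then `𝓛_Q^Pichler ⊆ 𝓛_Q^Acerbi`:
`∫_{(0,1)} F^←_{|X|}(u) dQ(u) < ∞` implies `∫_{(0,1)} |F^←_X(u)| dQ(u) < ∞`. -/
theorem pichler_subset_acerbi_of_convex {Ω : Type*} [MeasurableSpace Ω]
    (P : Measure Ω) [IsProbabilityMeasure P] (D : ℝ → ℝ) (Q : Measure ℝ)
    (hD : IsDistortion D) (hQ : IsCorresponding D Q)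
    (hconv : ConvexOn ℝ (Set.Icc (0:ℝ) 1) D) :
    ∀ X : Ω → ℝ, Measurable X →
      (∫⁻ u in Set.Ioo (0:ℝ) 1, ENNReal.ofReal (quantile P (fun ω => |X ω|) u) ∂Q) < ⊤ →
      (∫⁻ u in Set.Ioo (0:ℝ) 1, ENNReal.ofReal |quantile P X u| ∂Q) < ⊤ := by
  obtain ⟨hQprob, hQ1, hQint⟩ := hQ
  intro X hX hint
  set g : ℝ → ℝ := quantile P (fun ω => |X ω|) with hg_def
  set q : ℝ → ℝ := quantile P X with hq_def
  set ν : Measure ℝ := Q.restrict (Set.Ioo (0:ℝ) 1) with hν_def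
  -- basic facts about D
  have hD1 : D 1 = 1 := by
    have hle : D 1 ≤ 1 := (hD.mapsTo 1 ⟨zero_le_one, le_rfl⟩).2
    have hge : (1 : ℝ) ≤ D 1 := by
      have hne : (D '' Set.Ioo 0 1).Nonempty :=
        ⟨D (1/2), Set.mem_image_of_mem D (by norm_num)⟩
      have h : sSup (D '' Set.Ioo 0 1) ≤ D 1 := by
        apply csSup_le hne
        rintro y ⟨w, hw, rfl⟩
        exact hD.mono hw.1.le hw.2.le le_rfl
      rwa [hD.sup_one] at h
    linarith
  have hDle : ∀ c ∈ Set.Icc (0:ℝ) 1, D c ≤ c := by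
    intro c hc
    have h := hconv.2 (Set.left_mem_Icc.mpr zero_le_one) (Set.right_mem_Icc.mpr zero_le_one)
      ((by linarith [hc.2] : (0:ℝ) ≤ 1 - c)) hc.1 (by ring)
    simpa [hD.zero, hD1] using h
  -- measure of initial segments
  have hQIoc : ∀ c ∈ Set.Ioo (0:ℝ) 1, Q (Set.Ioc 0 c) ≤ ENNReal.ofReal (D c) := by
    intro c hc
    set a : ℕ → ℝ := fun n => c / (n + 2) with ha_def
    have ha_pos : ∀ n, 0 < a n := fun n => div_pos hc.1 (by positivity)
    have ha_le : ∀ n, a n ≤ c := by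
      intro n
      rw [ha_def]
      rw [div_le_iff₀ (by positivity)]
      nlinarith [hc.1]
    have ha_anti : Antitone a := by
      intro m n hmn
      apply div_le_div_of_nonneg_left hc.1.le (by positivity)
      have : (m : ℝ) ≤ n := by exact_mod_cast hmn
      linarith
    have key : ∀ n, Q (Set.Ioc 0 c) ≤ Q (Set.Ioc 0 (a n)) + ENNReal.ofReal (D c) := by
      intro n
      have hsplit : Set.Ioc (0:ℝ) c ⊆ Set.Ioc 0 (a n) ∪ Set.Ioc (a n) c := by
        intro x hx
        rcases le_or_gt x (a n) with h | h
        · exact Or.inl ⟨hx.1, h⟩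
        · exact Or.inr ⟨h, hx.2⟩
      calc Q (Set.Ioc 0 c) ≤ Q (Set.Ioc 0 (a n)) + Q (Set.Ioc (a n) c) :=
            le_trans (measure_mono hsplit) (measure_union_le _ _)
        _ ≤ Q (Set.Ioc 0 (a n)) + ENNReal.ofReal (D c) := by
            gcongr
            rw [hQint (a n) c (ha_pos n) (ha_le n) hc.2]
            apply ENNReal.ofReal_le_ofReal
            have := (hD.mapsTo (a n) ⟨(ha_pos n).le, le_trans (ha_le n) hc.2.le⟩).1
            linarith
    have hI : (⋂ n : ℕ, Set.Ioc (0:ℝ) (a n)) = ∅ := by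
      ext x
      simp only [Set.mem_iInter, Set.mem_empty_iff_false, iff_false, not_forall]
      by_cases hx : 0 < x
      · obtain ⟨n, hn⟩ := exists_nat_gt (c / x)
        refine ⟨n, fun hmem => ?_⟩
        have h2 : a n < x := by
          rw [ha_def]
          rw [div_lt_iff₀ (by positivity)]
          rw [div_lt_iff₀ hx] at hn
          nlinarith
        exact absurd hmem.2 (not_le.mpr h2)
      · exact ⟨0, fun hmem => hx hmem.1⟩
    have htend : Filter.Tendsto (fun n : ℕ => Q (Set.Ioc 0 (a n))) Filter.atTop (nhds 0) := by
      have := tendsto_measure_iInter_atTop (μ := Q)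
        (s := fun n : ℕ => Set.Ioc (0:ℝ) (a n))
        (fun n => measurableSet_Ioc.nullMeasurableSet)
        (fun m n hmn => Set.Ioc_subset_Ioc_right (ha_anti hmn))
        ⟨0, measure_ne_top Q _⟩
      rwa [hI, measure_empty] at this
    have htend2 : Filter.Tendsto
        (fun n : ℕ => Q (Set.Ioc 0 (a n)) + ENNReal.ofReal (D c)) Filter.atTop
        (nhds (ENNReal.ofReal (D c))) := by
      have := htend.add (tendsto_const_nhds (x := ENNReal.ofReal (D c)))
      rwa [zero_add] at this
    exact ge_of_tendsto' htend2 key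
  -- measure of tail intervals
  have hQtail : ∀ c ∈ Set.Ioo (0:ℝ) 1, ENNReal.ofReal (1 - c) ≤ Q (Set.Ioo c 1) := by
    intro c hc
    have hsub : Set.Ioc (0:ℝ) c ⊆ Set.Ioo 0 1 := fun x hx => ⟨hx.1, lt_of_le_of_lt hx.2 hc.2⟩
    have hdiff : Set.Ioo (0:ℝ) 1 \ Set.Ioc 0 c = Set.Ioo c 1 := by
      ext x
      simp only [Set.mem_diff, Set.mem_Ioo, Set.mem_Ioc, not_and, not_le]
      constructor
      · rintro ⟨⟨h0, h1⟩, h2⟩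
        exact ⟨h2 h0, h1⟩
      · rintro ⟨h1, h2⟩
        exact ⟨⟨lt_trans hc.1 h1, h2⟩, fun _ => h1⟩
    have := measure_diff hsub measurableSet_Ioc.nullMeasurableSet (measure_ne_top Q _)
    rw [hdiff, hQ1] at this
    rw [this]
    calc ENNReal.ofReal (1 - c) = 1 - ENNReal.ofReal c := by
          rw [ENNReal.ofReal_sub 1 hc.1.le, ENNReal.ofReal_one]
      _ ≤ 1 - Q (Set.Ioc 0 c) := by
          apply tsub_le_tsub_left
          exact le_trans (hQIoc c hc) (ENNReal.ofReal_le_ofReal (hDle c ⟨hc.1.le, hc.2.le⟩))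
  -- null complement
  have hνcompl : ν ((Set.Ioo (0:ℝ) 1)ᶜ) = 0 := by
    rw [hν_def, Measure.restrict_apply measurableSet_Ioo.compl]
    simp
  have hgmono : MonotoneOn g (Set.Ioo (0:ℝ) 1) := quantile_monotoneOn P _ hX.abs
  have hmem : ∀ u ∈ Set.Ioo (0:ℝ) 1, (1 - u / 2) ∈ Set.Ioo (0:ℝ) 1 := by
    intro u hu
    constructor <;> [linarith [hu.2]; linarith [hu.1]]
  -- the key layercake comparison
  have hkey : ∀ t : ℝ, ν {u | t < g (1 - u / 2)} ≤ 2 * ν {u | t < g u} := by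
    intro t
    set B : Set ℝ := {u | t < g (1 - u / 2)} ∩ Set.Ioo 0 1 with hB_def
    have hB' : ν {u | t < g (1 - u / 2)} ≤ ν B := by
      calc ν {u | t < g (1 - u / 2)} ≤ ν (B ∪ (Set.Ioo (0:ℝ) 1)ᶜ) := by
            apply measure_mono
            intro u hu
            by_cases h : u ∈ Set.Ioo (0:ℝ) 1
            · exact Or.inl ⟨hu, h⟩
            · exact Or.inr h
        _ ≤ ν B + ν ((Set.Ioo (0:ℝ) 1)ᶜ) := measure_union_le _ _
        _ = ν B := by rw [hνcompl, add_zero]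
    rcases Set.eq_empty_or_nonempty B with hBe | ⟨u₀, hu₀⟩
    · rw [hBe] at hB'
      simp only [measure_empty, nonpos_iff_eq_zero] at hB'
      rw [hB']
      exact zero_le
    · have hBdd : BddAbove B := ⟨1, fun x hx => hx.2.2.le⟩
      set s : ℝ := sSup B with hs_def
      have hs_le1 : s ≤ 1 := csSup_le ⟨u₀, hu₀⟩ (fun x hx => hx.2.2.le)
      have hs_pos : 0 < s := lt_of_lt_of_le hu₀.2.1 (le_csSup hBdd hu₀)
      -- upper bound on ν B
      have hνB : ν B ≤ ENNReal.ofReal s := by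
        rcases lt_or_ge s 1 with hs1 | hs1
        · have hBsub : B ⊆ Set.Ioc 0 s := fun x hx => ⟨hx.2.1, le_csSup hBdd hx⟩
          calc ν B ≤ ν (Set.Ioc 0 s) := measure_mono hBsub
            _ = Q (Set.Ioc 0 s ∩ Set.Ioo 0 1) := by
                rw [hν_def, Measure.restrict_apply measurableSet_Ioc]
            _ = Q (Set.Ioc 0 s) := by
                congr 1
                exact Set.inter_eq_left.mpr (fun x hx => ⟨hx.1, lt_of_le_of_lt hx.2 hs1⟩)
            _ ≤ ENNReal.ofReal (D s) := hQIoc s ⟨hs_pos, hs1⟩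
            _ ≤ ENNReal.ofReal s := ENNReal.ofReal_le_ofReal (hDle s ⟨hs_pos.le, hs1.le⟩)
        · have hs1' : s = 1 := le_antisymm hs_le1 hs1
          calc ν B ≤ ν Set.univ := measure_mono (Set.subset_univ B)
            _ = Q (Set.Ioo 0 1) := by rw [hν_def, Measure.restrict_apply_univ]
            _ = 1 := hQ1
            _ = ENNReal.ofReal s := by rw [hs1']; simp
      -- lower bound on ν A
      have hνA : ENNReal.ofReal (s / 2) ≤ ν {u | t < g u} := by
        set c : ℝ := 1 - s / 2 with hc_def
        have hc : c ∈ Set.Ioo (0:ℝ) 1 := by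
          rw [hc_def]
          constructor <;> [linarith; linarith]
        have hAsub : Set.Ioo c 1 ⊆ {u | t < g u} := by
          intro w hw
          obtain ⟨u, hu, hu2⟩ := exists_lt_of_lt_csSup ⟨u₀, hu₀⟩
            (show 2 - 2 * w < s by rw [hc_def] at hw; linarith [hw.1])
          have h1 : 1 - u / 2 ≤ w := by linarith
          have hw01 : w ∈ Set.Ioo (0:ℝ) 1 := ⟨lt_trans hc.1 hw.1, hw.2⟩
          have := hgmono (hmem u hu.2) hw01 h1
          exact lt_of_lt_of_le hu.1 this
        have hinter : Set.Ioo c 1 ∩ Set.Ioo (0:ℝ) 1 = Set.Ioo c 1 :=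
          Set.inter_eq_left.mpr (fun x hx => ⟨lt_trans hc.1 hx.1, hx.2⟩)
        calc ENNReal.ofReal (s / 2) = ENNReal.ofReal (1 - c) := by
              congr 1
              rw [hc_def]
              ring
          _ ≤ Q (Set.Ioo c 1) := hQtail c hc
          _ = ν (Set.Ioo c 1) := by
              rw [hν_def, Measure.restrict_apply measurableSet_Ioo, hinter]
          _ ≤ ν {u | t < g u} := measure_mono hAsub
      calc ν {u | t < g (1 - u / 2)} ≤ ν B := hB'
        _ ≤ ENNReal.ofReal s := hνB
        _ = 2 * ENNReal.ofReal (s / 2) := by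
            rw [← ENNReal.ofReal_ofNat 2, ← ENNReal.ofReal_mul (by norm_num)]
            congr 1
            ring
        _ ≤ 2 * ν {u | t < g u} := by gcongr
  -- measurability
  have hg_meas : AEMeasurable g ν :=
    aemeasurable_restrict_of_monotoneOn measurableSet_Ioo hgmono
  have hg2_anti : AntitoneOn (fun u => g (1 - u / 2)) (Set.Ioo (0:ℝ) 1) := by
    intro u hu v hv huv
    exact hgmono (hmem v hv) (hmem u hu) (by linarith)
  have hg2_meas : AEMeasurable (fun u => g (1 - u / 2)) ν :=
    aemeasurable_restrict_of_antitoneOn measurableSet_Ioo hg2_anti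
  -- nonnegativity a.e.
  have hae : ∀ᵐ u ∂ν, u ∈ Set.Ioo (0:ℝ) 1 := ae_restrict_mem measurableSet_Ioo
  have hg_nn : 0 ≤ᵐ[ν] g := by
    filter_upwards [hae] with u hu
    exact quantile_abs_nonneg P X hu.1
  have hg2_nn : 0 ≤ᵐ[ν] fun u => g (1 - u / 2) := by
    filter_upwards [hae] with u hu
    exact quantile_abs_nonneg P X (hmem u hu).1
  -- the layercake bound
  have hL : (∫⁻ u, ENNReal.ofReal (g (1 - u / 2)) ∂ν) ≤
      2 * ∫⁻ u, ENNReal.ofReal (g u) ∂ν := by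
    rw [lintegral_eq_lintegral_meas_lt ν hg2_nn hg2_meas,
      lintegral_eq_lintegral_meas_lt ν hg_nn hg_meas]
    calc (∫⁻ t in Set.Ioi (0:ℝ), ν {u | t < g (1 - u / 2)})
        ≤ ∫⁻ t in Set.Ioi (0:ℝ), 2 * ν {u | t < g u} := lintegral_mono fun t => hkey t
      _ = 2 * ∫⁻ t in Set.Ioi (0:ℝ), ν {u | t < g u} :=
          lintegral_const_mul' 2 _ (by norm_num)
  -- pointwise bound
  have hpt : ∀ u ∈ Set.Ioo (0:ℝ) 1, |q u| ≤ g u + g (1 - u / 2) := by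
    intro u hu
    have h1 : q u ≤ g u := quantile_le_quantile_abs P X hX hu
    have h2 : -(g (1 - u / 2)) ≤ q u :=
      neg_quantile_abs_le P X hX hu (hmem u hu) (by linarith [hu.1])
    have h3 : 0 ≤ g u := quantile_abs_nonneg P X hu.1
    have h4 : 0 ≤ g (1 - u / 2) := quantile_abs_nonneg P X (hmem u hu).1
    rw [abs_le]
    constructor <;> [linarith; linarith]
  -- assemble
  calc (∫⁻ u in Set.Ioo (0:ℝ) 1, ENNReal.ofReal |quantile P X u| ∂Q)
      = ∫⁻ u, ENNReal.ofReal |q u| ∂ν := rfl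
    _ ≤ ∫⁻ u, (ENNReal.ofReal (g u) + ENNReal.ofReal (g (1 - u / 2))) ∂ν := by
        apply lintegral_mono_ae
        filter_upwards [hae] with u hu
        calc ENNReal.ofReal |q u| ≤ ENNReal.ofReal (g u + g (1 - u / 2)) :=
              ENNReal.ofReal_le_ofReal (hpt u hu)
          _ ≤ ENNReal.ofReal (g u) + ENNReal.ofReal (g (1 - u / 2)) :=
              ENNReal.ofReal_add_le
    _ = (∫⁻ u, ENNReal.ofReal (g u) ∂ν) + ∫⁻ u, ENNReal.ofReal (g (1 - u / 2)) ∂ν :=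
        lintegral_add_left' hg_meas.ennreal_ofReal _
    _ ≤ (∫⁻ u, ENNReal.ofReal (g u) ∂ν) + 2 * ∫⁻ u, ENNReal.ofReal (g u) ∂ν := by gcongr
    _ < ⊤ := by
        have : (∫⁻ u, ENNReal.ofReal (g u) ∂ν) < ⊤ := hint
        exact ENNReal.add_lt_top.mpr ⟨this, ENNReal.mul_lt_top (by norm_num) this⟩
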